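/- Let π be a simple permutation of size n, C₁, …, Cₙ sets of permutations, and γ a permutation whose embeddings into π are α₁, …, α_ℓ. Then the set of permutations of π[C₁,…,Cₙ] that avoid γ equals the union, over tuples (k₁,…,k_ℓ) ∈ [1..n]^ℓ such that each γ_{αᵢ(kᵢ)} is neither the empty permutation nor the permutation 1, of the sets π[C₁⟨E_{1,k}⟩, …, Cₙ⟨E_{n,k}⟩], where E_{m,k} = {γ_{αᵢ(kᵢ)} : i ∈ [1..ℓ], kᵢ = m} and C⟨F⟩ is the set of permutations of C avoiding every pattern in F. -/

import Mathlib

/-- A permutation of size `n`, encoded as a bijection of `Fin n`. -/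
abbrev Perm' (n : ℕ) := Equiv.Perm (Fin n)

/-- A finite permutation of arbitrary size. -/
abbrev PermS := Σ n : ℕ, Perm' n

/-- `π` is a pattern of `σ`: some subsequence of `σ` is order-isomorphic to `π`. -/
def IsPattern {k n : ℕ} (π : Perm' k) (σ : Perm' n) : Prop :=
  ∃ f : Fin k ↪o Fin n, ∀ i j : Fin k, π i < π j ↔ σ (f i) < σ (f j)

/-- Pattern containment on finite permutations of arbitrary sizes. -/
def PattLe (π σ : PermS) : Prop := IsPattern π.2 σ.2

/-- `s` is an interval of `σ`: a nonempty range of consecutive indices whose image is a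
range of consecutive values. -/
def IsIntervalF {n : ℕ} (σ : Perm' n) (s : Finset (Fin n)) : Prop :=
  s.Nonempty ∧ (∃ a b : Fin n, s = Finset.Icc a b) ∧ ∃ c d : Fin n, s.image σ = Finset.Icc c d

/-- A permutation is simple if it has size at least 4 and only trivial intervals. -/
def IsSimple {n : ℕ} (σ : Perm' n) : Prop :=
  4 ≤ n ∧ ∀ s : Finset (Fin n), IsIntervalF σ s → s.card = 1 ∨ s = Finset.univ

def IsSimpleS (x : PermS) : Prop := IsSimple x.2

/-- `τ` is the substitution (inflation) `σ[q 0, …, q (n-1)]`: the positions of `τ` split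
into `n` consecutive blocks, the `i`-th of size `p i` and order-isomorphic to `q i`, the
blocks of values being arranged according to `σ`. -/
def IsInflation {n N : ℕ} (σ : Perm' n) (p : Fin n → ℕ) (q : ∀ i, Perm' (p i))
    (τ : Perm' N) : Prop :=
  ∃ e : (Σ i : Fin n, Fin (p i)) ≃ Fin N,
    (∀ (i j : Fin n) (x : Fin (p i)) (y : Fin (p j)),
      e ⟨i, x⟩ < e ⟨j, y⟩ ↔ (i < j ∨ ∃ h : i = j, (Fin.cast (congrArg p h) x : ℕ) < (y : ℕ))) ∧
    (∀ (i j : Fin n) (x : Fin (p i)) (y : Fin (p j)),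
      τ (e ⟨i, x⟩) < τ (e ⟨j, y⟩) ↔
        (σ i < σ j ∨ ∃ h : i = j, (q j (Fin.cast (congrArg p h) x) : ℕ) < (q j y : ℕ)))

/-- A permutation class: a set of (nonempty) permutations closed under patterns. -/
def IsPermClass (C : Set PermS) : Prop :=
  (∀ σ ∈ C, 1 ≤ σ.1) ∧ ∀ σ ∈ C, ∀ π : PermS, 1 ≤ π.1 → PattLe π σ → π ∈ C

/-- The substitution closure of a set of permutations. -/
inductive SubstClosure (C : Set PermS) : PermS → Prop
  | base {σ : PermS} : σ ∈ C → SubstClosure C σ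
  | infl {n N : ℕ} (σ : Perm' n) (p : Fin n → ℕ) (q : ∀ i, Perm' (p i)) (τ : Perm' N) :
      (⟨n, σ⟩ : PermS) ∈ C → (∀ i, SubstClosure C ⟨p i, q i⟩) →
      IsInflation σ p q τ → SubstClosure C ⟨N, τ⟩

/-- `Restr P E A`: permutations of `P` avoiding every pattern of `E` and containing every
pattern of `A`. -/
def Restr (P E A : Set PermS) : Set PermS :=
  {σ ∈ P | (∀ π ∈ E, ¬ PattLe π σ) ∧ ∀ π ∈ A, PattLe π σ}

/-- The set `π[S 0, …, S (n-1)]` of all inflations of `π` with components in the `S i`. -/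
def InflSet {n : ℕ} (π : Perm' n) (S : Fin n → Set PermS) : Set PermS :=
  {τ | ∃ (p : Fin n → ℕ) (q : ∀ i, Perm' (p i)),
    (∀ i, (⟨p i, q i⟩ : PermS) ∈ S i) ∧ IsInflation π p q τ.2}

/-- An embedding of `γ` into `π`: a cutting of the index word of `γ` into `n` (possibly
empty) consecutive factors whose blocks realize `γ` as a generalized substitution in `π`. -/
structure PatternEmbedding {g n : ℕ} (γ : Perm' g) (π : Perm' n) where
  c : Fin (n + 1) → ℕ
  mono : Monotone c
  first : c 0 = 0
  last : c (Fin.last n) = g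
  compat : ∀ (i j : Fin n) (a b : Fin g), i ≠ j →
    c i.castSucc ≤ (a : ℕ) → (a : ℕ) < c i.succ →
    c j.castSucc ≤ (b : ℕ) → (b : ℕ) < c j.succ →
    (γ a < γ b ↔ π i < π j)

/-- `ρ` is the normalization of the restriction of `γ` to the positions in `[l, r)`. -/
def IsBlockPattern {g m : ℕ} (γ : Perm' g) (l r : ℕ) (ρ : Perm' m) : Prop :=
  ∃ e : Fin m ≃ {a : Fin g // l ≤ (a : ℕ) ∧ (a : ℕ) < r},
    (∀ x y : Fin m, x < y ↔ (e x).1 < (e y).1) ∧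
    ∀ x y : Fin m, ρ x < ρ y ↔ γ (e x).1 < γ (e y).1

/-- A block decomposition of `σ`: a sequence of intervals `(i₁,j₁),…,(iₘ,jₘ)` with
`i₁ = 1`, `jₘ = n` and `i_{k+1} = j_k + 1` (here with 0-indexed positions). -/
def IsBlockDecomp {n : ℕ} (σ : Perm' n) (L : List (Fin n × Fin n)) : Prop :=
  ∃ h : L ≠ [],
    (∀ p ∈ L, p.1 ≤ p.2 ∧ IsIntervalF σ (Finset.Icc p.1 p.2)) ∧
    ((L.head h).1 : ℕ) = 0 ∧ ((L.getLast h).2 : ℕ) = n - 1 ∧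
    List.Chain' (fun p q => (q.1 : ℕ) = (p.2 : ℕ) + 1) L
lemma qCastVal {n : ℕ} {p : Fin n → ℕ} (q : ∀ i, Perm' (p i)) {i k : Fin n}
    (h : i = k) (x : Fin (p i)) :
    (q i x : ℕ) = (q k (Fin.cast (congrArg p h) x) : ℕ) := by subst h; rfl

lemma isPattern_of_le_one {s m : ℕ} (hs : s ≤ 1) (hm : s ≤ m) (ρ : Perm' s)
    (σ : Perm' m) : IsPattern ρ σ := by
  refine ⟨OrderEmbedding.ofStrictMono (Fin.castLE hm) (fun a b hab => by
    simp only [Fin.lt_def, Fin.coe_castLE]; exact hab), fun i j => ?_⟩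
  have hij : i = j := by
    have hi := i.isLt; have hj := j.isLt
    exact Fin.ext (by omega)
  subst hij
  exact iff_of_false (lt_irrefl _) (lt_irrefl _)

lemma card_block_le_one {g : ℕ} {l r : ℕ} (h : r ≤ l + 1) :
    Fintype.card {a : Fin g // l ≤ (a : ℕ) ∧ (a : ℕ) < r} ≤ 1 :=
  Fintype.card_le_one_iff.mpr (by
    rintro ⟨a, ha1, ha2⟩ ⟨b, hb1, hb2⟩
    apply Subtype.ext
    show a = b
    apply Fin.ext
    omega)

lemma exists_isBlockPattern {g : ℕ} (γ : Perm' g) (l r : ℕ) :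
    ∃ ρ : Perm' (Fintype.card {a : Fin g // l ≤ (a : ℕ) ∧ (a : ℕ) < r}),
      IsBlockPattern γ l r ρ := by
  set s := Fintype.card {a : Fin g // l ≤ (a : ℕ) ∧ (a : ℕ) < r} with hs
  let E : Fin s ≃o {a : Fin g // l ≤ (a : ℕ) ∧ (a : ℕ) < r} := monoEquivOfFin _ rfl
  set v : Fin s → Fin g := fun x => γ (E x).1 with hv
  have hvinj : Function.Injective v := by
    intro x y h
    exact E.injective (Subtype.ext (γ.injective h))
  set T : Finset (Fin g) := Finset.univ.image v with hT
  have hTcard : T.card = s := by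
    rw [hT, Finset.card_image_of_injective _ hvinj, Finset.card_univ, Fintype.card_fin]
  let E2 : Fin s ≃o {x // x ∈ T} := T.orderIsoOfFin hTcard
  set ρf : Fin s → Fin s := fun x => E2.symm ⟨v x, by simp [hT]⟩ with hρf
  have hρinj : Function.Injective ρf := by
    intro x y h
    exact hvinj (congrArg Subtype.val (E2.symm.injective h))
  have hbij : Function.Bijective ρf := Finite.injective_iff_bijective.mp hρinj
  refine ⟨Equiv.ofBijective ρf hbij, E.toEquiv, fun x y => ?_, fun x y => ?_⟩
  · exact (Subtype.coe_lt_coe.trans E.lt_iff_lt).symm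
  · show ρf x < ρf y ↔ _
    rw [hρf]
    simp only [E2.symm.lt_iff_lt, Subtype.mk_lt_mk]
    exact Iff.rfl

lemma lemmaA {n N g : ℕ} {π : Perm' n} {τ : Perm' N} {p : Fin n → ℕ}
    {q : ∀ i, Perm' (p i)} (hinf : IsInflation π p q τ) {γ : Perm' g}
    (hocc : IsPattern γ τ) :
    ∃ α : PatternEmbedding γ π, ∀ (k : Fin n) (s : ℕ) (ρ : Perm' s),
      IsBlockPattern γ (α.c k.castSucc) (α.c k.succ) ρ → IsPattern ρ (q k) := by
  obtain ⟨e, h1, h2⟩ := hinf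
  obtain ⟨f, hf⟩ := hocc
  set ι : Fin g → Fin n := fun a => (e.symm (f a)).1 with hι
  set ξ : (a : Fin g) → Fin (p (ι a)) := fun a => (e.symm (f a)).2 with hξ
  have hfe : ∀ a, f a = e ⟨ι a, ξ a⟩ := fun a => (e.apply_symm_apply (f a)).symm
  have key : ∀ a b : Fin g, f a < f b ↔ (ι a < ι b ∨
      ∃ h : ι a = ι b, ((Fin.cast (congrArg p h) (ξ a)) : ℕ) < (ξ b : ℕ)) := by
    intro a b
    rw [hfe a, hfe b]
    exact h1 _ _ _ _
  have hmono : Monotone ι := by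
    intro a b hab
    rcases eq_or_lt_of_le hab with h | h
    · exact le_of_eq (by rw [h])
    · rcases (key a b).mp (f.lt_iff_lt.mpr h) with h' | ⟨h', _⟩
      · exact le_of_lt h'
      · exact le_of_eq h'
  -- same-block and cross-block comparisons
  have pos_iff : ∀ a b : Fin g, ι a = ι b → (a < b ↔ (ξ a : ℕ) < (ξ b : ℕ)) := by
    intro a b h
    rw [← f.lt_iff_lt, key a b]
    constructor
    · rintro (h' | ⟨h', hlt⟩)
      · rw [h] at h'; exact absurd h' (lt_irrefl _)
      · rwa [Fin.coe_cast] at hlt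
    · intro hlt
      exact Or.inr ⟨h, by rwa [Fin.coe_cast]⟩
  have val_iff : ∀ a b : Fin g, ι a = ι b →
      (γ a < γ b ↔ (q (ι a) (ξ a) : ℕ) < (q (ι b) (ξ b) : ℕ)) := by
    intro a b h
    rw [hf a b, hfe a, hfe b, h2]
    constructor
    · rintro (h' | ⟨h', hlt⟩)
      · rw [h] at h'; exact absurd h' (lt_irrefl _)
      · rwa [← qCastVal q h'] at hlt
    · intro hlt
      exact Or.inr ⟨h, by rwa [qCastVal q h] at hlt⟩
  have cross_iff : ∀ a b : Fin g, ι a ≠ ι b → (γ a < γ b ↔ π (ι a) < π (ι b)) := by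
    intro a b h
    rw [hf a b, hfe a, hfe b, h2]
    constructor
    · rintro (h' | ⟨h', _⟩)
      · exact h'
      · exact absurd h' h
    · exact Or.inl
  -- the cut sequence
  set c : Fin (n + 1) → ℕ :=
    fun i => (Finset.univ.filter (fun a : Fin g => (ι a : ℕ) < (i : ℕ))).card with hcdef
  have cmono : Monotone c := by
    intro i j hij
    apply Finset.card_le_card
    intro a ha
    simp only [Finset.mem_filter, Finset.mem_univ, true_and] at ha ⊢
    exact lt_of_lt_of_le ha hij
  have cfirst : c 0 = 0 := by simp [hcdef]
  have clast : c (Fin.last n) = g := by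
    have : ∀ a : Fin g, (ι a : ℕ) < ((Fin.last n : Fin (n+1)) : ℕ) := fun a => (ι a).isLt
    simp [hcdef, this]
  have hlow : ∀ a : Fin g, c (ι a).castSucc ≤ (a : ℕ) := by
    intro a
    have hsub : Finset.univ.filter (fun b : Fin g => (ι b : ℕ) < ((ι a).castSucc : ℕ)) ⊆
        Finset.univ.filter (fun b : Fin g => b < a) := by
      intro b hb
      simp only [Finset.mem_filter, Finset.mem_univ, true_and, Fin.coe_castSucc] at hb ⊢
      by_contra hba
      push_neg at hba
      have := hmono hba
      rw [Fin.le_def] at this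
      omega
    have hcard : (Finset.univ.filter (fun b : Fin g => b < a)).card = (a : ℕ) := by
      have : Finset.univ.filter (fun b : Fin g => b < a) = Finset.Iio a := by
        ext b; simp
      rw [this]; simp
    calc c (ι a).castSucc ≤ _ := Finset.card_le_card hsub
    _ = (a : ℕ) := hcard
  have hhigh : ∀ a : Fin g, (a : ℕ) < c (ι a).succ := by
    intro a
    have hsub : Finset.univ.filter (fun b : Fin g => b ≤ a) ⊆
        Finset.univ.filter (fun b : Fin g => (ι b : ℕ) < (((ι a).succ : Fin (n+1)) : ℕ)) := by
      intro b hb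
      simp only [Finset.mem_filter, Finset.mem_univ, true_and, Fin.val_succ] at hb ⊢
      have := hmono hb
      rw [Fin.le_def] at this
      omega
    have hcard : (Finset.univ.filter (fun b : Fin g => b ≤ a)).card = (a : ℕ) + 1 := by
      have : Finset.univ.filter (fun b : Fin g => b ≤ a) = Finset.Iic a := by
        ext b; simp
      rw [this]; simp
    have hle := Finset.card_le_card hsub
    rw [hcard] at hle
    have hceq : c (ι a).succ = (Finset.univ.filter
        (fun b : Fin g => (ι b : ℕ) < (((ι a).succ : Fin (n+1)) : ℕ))).card := rfl
    omega
  have hchar : ∀ (a : Fin g) (k : Fin n),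
      c k.castSucc ≤ (a : ℕ) → (a : ℕ) < c k.succ → ι a = k := by
    intro a k h1' h2'
    by_contra hne
    rcases lt_or_gt_of_ne hne with hlt | hgt
    · -- ι a < k : c (ι a).succ ≤ c k.castSucc
      have : c (ι a).succ ≤ c k.castSucc := by
        apply cmono
        rw [Fin.le_def, Fin.val_succ, Fin.coe_castSucc]
        exact hlt
      have := hhigh a
      omega
    · have : c k.succ ≤ c (ι a).castSucc := by
        apply cmono
        rw [Fin.le_def, Fin.val_succ, Fin.coe_castSucc]
        exact hgt
      have := hlow a
      omega
  refine ⟨⟨c, cmono, cfirst, clast, ?_⟩, ?_⟩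
  · intro i j a b hij hai hai' hbj hbj'
    have ha : ι a = i := hchar a i hai hai'
    have hb : ι b = j := hchar b j hbj hbj'
    rw [← ha, ← hb]
    exact cross_iff a b (fun h => hij (by rw [← ha, ← hb, h]))
  · intro k s ρ hbp
    obtain ⟨e', he1, he2⟩ := hbp
    -- every element in the block has ι = k
    have hk : ∀ z : Fin s, ι (e' z).1 = k := fun z =>
      hchar (e' z).1 k (e' z).2.1 (e' z).2.2
    set F : Fin s → Fin (p k) :=
      fun z => Fin.cast (congrArg p (hk z)) (ξ (e' z).1) with hF
    have hFval : ∀ z, (F z : ℕ) = (ξ (e' z).1 : ℕ) := by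
      intro z; rw [hF]; exact Fin.coe_cast _ _
    have hFmono : StrictMono F := by
      intro z w hzw
      have h1' : (e' z).1 < (e' w).1 := (he1 z w).mp hzw
      have := (pos_iff _ _ ((hk z).trans (hk w).symm)).mp h1'
      rw [Fin.lt_def, hFval, hFval]
      exact this
    refine ⟨OrderEmbedding.ofStrictMono F hFmono, fun z w => ?_⟩
    show ρ z < ρ w ↔ q k (F z) < q k (F w)
    rw [he2 z w, val_iff _ _ ((hk z).trans (hk w).symm)]
    rw [qCastVal q (hk z), qCastVal q (hk w), Fin.lt_def]

lemma lemmaB {n N g : ℕ} {π : Perm' n} {τ : Perm' N} {p : Fin n → ℕ}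
    {q : ∀ i, Perm' (p i)} (hn : 1 ≤ n) (hinf : IsInflation π p q τ) {γ : Perm' g}
    (α : PatternEmbedding γ π)
    (hblocks : ∀ k : Fin n, ∃ (s : ℕ) (ρ : Perm' s),
      IsBlockPattern γ (α.c k.castSucc) (α.c k.succ) ρ ∧ IsPattern ρ (q k)) :
    IsPattern γ τ := by
  obtain ⟨e, h1, h2⟩ := hinf
  choose s ρ hbp hpat using hblocks
  choose E hE1 hE2 using hbp
  choose F hFpat using hpat
  set Z : ∀ k : Fin n, {a : Fin g // α.c k.castSucc ≤ (a:ℕ) ∧ (a:ℕ) < α.c k.succ} → Fin (p k) :=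
    fun k u => F k ((E k).symm u) with hZ
  have hZpos : ∀ (k) (u v), u.1 < v.1 ↔ Z k u < Z k v := by
    intro k u v
    rw [hZ]
    simp only []
    rw [(F k).lt_iff_lt, hE1 k ((E k).symm u) ((E k).symm v),
      Equiv.apply_symm_apply, Equiv.apply_symm_apply]
  have hZval : ∀ (k) (u v), γ u.1 < γ v.1 ↔ q k (Z k u) < q k (Z k v) := by
    intro k u v
    rw [hZ]
    simp only []
    rw [← hFpat k ((E k).symm u) ((E k).symm v), hE2 k ((E k).symm u) ((E k).symm v),
      Equiv.apply_symm_apply, Equiv.apply_symm_apply]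
  have hZposN : ∀ (k₁ k₂ : Fin n) (h : k₁ = k₂) u v,
      (u.1 < v.1 ↔ (Z k₁ u : ℕ) < (Z k₂ v : ℕ)) := by
    intro k₁ k₂ h
    subst h
    intro u v
    rw [hZpos k₁ u v, Fin.lt_def]
  have hZvalN : ∀ (k₁ k₂ : Fin n) (h : k₁ = k₂) u v,
      (γ u.1 < γ v.1 ↔ (q k₁ (Z k₁ u) : ℕ) < (q k₂ (Z k₂ v) : ℕ)) := by
    intro k₁ k₂ h
    subst h
    intro u v
    rw [hZval k₁ u v, Fin.lt_def]
  haveI : NeZero n := ⟨by omega⟩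
  have hex : ∀ a : Fin g, ∃ k : Fin n, α.c k.castSucc ≤ (a:ℕ) ∧ (a:ℕ) < α.c k.succ := by
    intro a
    set S : Finset (Fin n) := Finset.univ.filter (fun k => α.c k.castSucc ≤ (a:ℕ)) with hS
    have hS0 : (0 : Fin n) ∈ S := by
      have h0 : (0 : Fin n).castSucc = (0 : Fin (n+1)) := Fin.ext (by simp)
      simp only [hS, Finset.mem_filter, Finset.mem_univ, true_and, h0, α.first]
      omega
    have hne : S.Nonempty := ⟨_, hS0⟩
    set k := S.max' hne with hkdef
    have hk1 : α.c k.castSucc ≤ (a:ℕ) := by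
      have := S.max'_mem hne
      simpa [hS] using this
    refine ⟨k, hk1, ?_⟩
    by_contra hcon
    push_neg at hcon
    by_cases htop : (k:ℕ) + 1 = n
    · have hlast : k.succ = Fin.last n := Fin.ext (by simp [htop])
      rw [hlast, α.last] at hcon
      have := a.isLt
      omega
    · have hlt : (k:ℕ) + 1 < n := lt_of_le_of_ne k.isLt htop
      set k' : Fin n := ⟨(k:ℕ)+1, hlt⟩ with hk'
      have hcs : k'.castSucc = k.succ := Fin.ext (by simp [hk'])
      have hk'S : k' ∈ S := by
        simp only [hS, Finset.mem_filter, Finset.mem_univ, true_and, hcs]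
        exact hcon
      have hle := S.le_max' k' hk'S
      rw [Fin.le_def] at hle
      simp [hk'] at hle
      exact lt_irrefl k hle
  choose K hK1 hK2 using hex
  have hKmono : ∀ a b : Fin g, a < b → K a ≤ K b := by
    intro a b hab
    by_contra hcon
    push_neg at hcon
    have hcc : α.c (K b).succ ≤ α.c (K a).castSucc := by
      apply α.mono
      rw [Fin.le_def, Fin.val_succ, Fin.coe_castSucc]
      exact Fin.lt_def.mp hcon
    have h1' := hK1 a
    have h2' := hK2 b
    have hab' := Fin.lt_def.mp hab
    omega
  set bigF : Fin g → Fin N := fun a => e ⟨K a, Z (K a) ⟨a, hK1 a, hK2 a⟩⟩ with hbigF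
  have hsm : StrictMono bigF := by
    intro a b hab
    show e _ < e _
    rw [h1]
    rcases eq_or_lt_of_le (hKmono a b hab) with h | h
    · exact Or.inr ⟨h, by
        rw [Fin.coe_cast]
        exact (hZposN (K a) (K b) h ⟨a, hK1 a, hK2 a⟩ ⟨b, hK1 b, hK2 b⟩).mp hab⟩
    · exact Or.inl h
  refine ⟨OrderEmbedding.ofStrictMono bigF hsm, fun a b => ?_⟩
  show γ a < γ b ↔ τ (bigF a) < τ (bigF b)
  rw [hbigF]
  simp only []
  rw [h2]
  by_cases h : K a = K b
  · constructor
    · intro hγ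
      refine Or.inr ⟨h, ?_⟩
      rw [← qCastVal q h]
      exact (hZvalN (K a) (K b) h ⟨a, hK1 a, hK2 a⟩ ⟨b, hK1 b, hK2 b⟩).mp hγ
    · rintro (hπ | ⟨h', hlt⟩)
      · rw [h] at hπ
        exact absurd hπ (lt_irrefl _)
      · rw [← qCastVal q h'] at hlt
        exact (hZvalN (K a) (K b) h' ⟨a, hK1 a, hK2 a⟩ ⟨b, hK1 b, hK2 b⟩).mpr hlt
  · rw [α.compat (K a) (K b) a b h (hK1 a) (hK2 a) (hK1 b) (hK2 b)]
    constructor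
    · exact Or.inl
    · rintro (hπ | ⟨h', _⟩)
      · exact hπ
      · exact absurd h' h


/-- Propagation of an avoidance constraint: for a simple root `π`, the permutations of
`π[C₁,…,Cₙ]` avoiding `γ` are the union, over all choices `κ` selecting for each
embedding `α` of `γ` in `π` a coordinate whose block `γ_{α(κ α)}` has size at least 2, of
the sets `π[C₁⟨E₁⟩,…,Cₙ⟨Eₙ⟩]` where `Eₘ = {γ_{α(κ α)} : κ α = m}`. -/
theorem inflSet_avoiding_eq_union {n g : ℕ} (π : Perm' n) (hπ : IsSimple π)
    (C : Fin n → Set PermS) (γ : Perm' g) (hC : ∀ i, ∀ x ∈ C i, 1 ≤ x.1) :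
    {τ ∈ InflSet π C | ¬ PattLe ⟨g, γ⟩ τ} =
      ⋃ (κ : PatternEmbedding γ π → Fin n)
        (_ : ∀ α : PatternEmbedding γ π, 2 ≤ α.c (κ α).succ - α.c (κ α).castSucc),
        InflSet π (fun m =>
          {x ∈ C m | ∀ α : PatternEmbedding γ π, κ α = m →
            ∀ (s : ℕ) (ρ : Perm' s),
              IsBlockPattern γ (α.c (κ α).castSucc) (α.c (κ α).succ) ρ →
                ¬ PattLe ⟨s, ρ⟩ x}) := by
  obtain ⟨hn4, -⟩ := hπ
  have hn : 1 ≤ n := by omega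
  ext τ
  simp only [Set.mem_setOf_eq, Set.mem_iUnion, InflSet]
  constructor
  · rintro ⟨⟨p, q, hq, hinf⟩, hav⟩
    have hchoice : ∀ α : PatternEmbedding γ π, ∃ k : Fin n,
        2 ≤ α.c k.succ - α.c k.castSucc ∧
        ∀ (s : ℕ) (ρ : Perm' s), IsBlockPattern γ (α.c k.castSucc) (α.c k.succ) ρ →
          ¬ IsPattern ρ (q k) := by
      intro α
      by_contra hcon
      push_neg at hcon
      apply hav
      show IsPattern γ τ.2
      apply lemmaB hn hinf α
      intro k
      by_cases hsize : 2 ≤ α.c k.succ - α.c k.castSucc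
      · obtain ⟨s, ρ, hibp, hpat⟩ := hcon k hsize
        exact ⟨s, ρ, hibp, hpat⟩
      · obtain ⟨ρ, hibp⟩ := exists_isBlockPattern γ (α.c k.castSucc) (α.c k.succ)
        have hmono := α.mono (show k.castSucc ≤ k.succ by
          rw [Fin.le_def, Fin.coe_castSucc, Fin.val_succ]; omega)
        have hcard : Fintype.card
            {a : Fin g // α.c k.castSucc ≤ (a : ℕ) ∧ (a : ℕ) < α.c k.succ} ≤ 1 :=
          card_block_le_one (by omega)
        have h1p : 1 ≤ p k := hC k ⟨p k, q k⟩ (hq k)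
        exact ⟨_, ρ, hibp, isPattern_of_le_one hcard (hcard.trans h1p) ρ (q k)⟩
    choose κ hκ1 hκ2 using hchoice
    refine ⟨κ, hκ1, p, q, fun m => ⟨hq m, ?_⟩, hinf⟩
    intro α hm s ρ hibp
    subst hm
    exact hκ2 α s ρ hibp
  · rintro ⟨κ, hκ, p, q, hq, hinf⟩
    refine ⟨⟨p, q, fun i => (hq i).1, hinf⟩, ?_⟩
    intro hocc
    obtain ⟨α, hα⟩ := lemmaA hinf hocc
    obtain ⟨ρ, hibp⟩ := exists_isBlockPattern γ (α.c (κ α).castSucc) (α.c (κ α).succ)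
    exact (hq (κ α)).2 α rfl _ ρ hibp (hα (κ α) _ ρ hibp)
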